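/- For every n ≥ 1, the graph B_n is isomorphic to the intersection graph of a finite family of axis-parallel closed line segments in ℝ² among which at most two distinct (Euclidean) lengths occur. -/

import Mathlib

/-- Vertex set of `B_n`: the `u_i`'s, the `w_j`'s, the subdivision vertices `x_{i,j}` and
`y_{i,j}`. -/
abbrev BnV (n : ℕ) : Type := (Fin n ⊕ Fin n) ⊕ ((Fin n × Fin n) ⊕ (Fin n × Fin n))

/-- The edges of `B_n`: exactly `u_i w_j`, `u_i x_{i,j}`, `x_{i,j} y_{i,j}` and
`y_{i,j} w_j` for all `i, j`. -/
def BnRel (n : ℕ) : BnV n → BnV n → Prop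
  | Sum.inl (Sum.inl _), Sum.inl (Sum.inr _) => True
  | Sum.inl (Sum.inl i), Sum.inr (Sum.inl p) => p.1 = i
  | Sum.inr (Sum.inl p), Sum.inr (Sum.inr q) => p = q
  | Sum.inr (Sum.inr p), Sum.inl (Sum.inr j) => p.2 = j
  | _, _ => False

/-- The graph `B_n`: obtained from `K_{n,n}` by subdividing every edge twice and adding
back the original edges. -/
def BnGraph (n : ℕ) : SimpleGraph (BnV n) := SimpleGraph.fromRel (BnRel n)

noncomputable def aux8pt (a b : ℝ) : EuclideanSpace ℝ (Fin 2) :=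
  (WithLp.equiv 2 (Fin 2 → ℝ)).symm ![a, b]

@[simp] lemma aux8pt_zero (a b : ℝ) : aux8pt a b 0 = a := rfl
@[simp] lemma aux8pt_one (a b : ℝ) : aux8pt a b 1 = b := rfl

lemma aux8_dist (a b c d : ℝ) :
    dist (aux8pt a b) (aux8pt c d) = Real.sqrt ((a-c)^2 + (b-d)^2) := by
  rw [EuclideanSpace.dist_eq]
  simp [Fin.sum_univ_two, Real.dist_eq, sq_abs]

lemma aux8_mem_horiz {a b c : ℝ} (hab : a ≤ b) {z : EuclideanSpace ℝ (Fin 2)} :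
    z ∈ segment ℝ (aux8pt a c) (aux8pt b c) ↔ a ≤ z 0 ∧ z 0 ≤ b ∧ z 1 = c := by
  rw [segment_eq_image]
  constructor
  · rintro ⟨θ, ⟨h0, h1⟩, rfl⟩
    simp only [PiLp.add_apply, PiLp.smul_apply, aux8pt_zero, aux8pt_one, smul_eq_mul]
    refine ⟨by nlinarith, by nlinarith, by ring⟩
  · rintro ⟨h1, h2, h3⟩
    rcases eq_or_lt_of_le hab with h | h
    · refine ⟨0, ⟨le_refl _, zero_le_one⟩, ?_⟩
      have hz : z 0 = a := le_antisymm (h ▸ h2) h1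
      ext i; fin_cases i <;>
        simp [PiLp.add_apply, PiLp.smul_apply, hz, h3]
    · have hba : b - a ≠ 0 := sub_ne_zero.2 (ne_of_gt h)
      refine ⟨(z 0 - a)/(b - a), ⟨div_nonneg (by linarith) (by linarith),
        (div_le_one (by linarith)).2 (by linarith)⟩, ?_⟩
      ext i; fin_cases i <;>
        simp only [Fin.zero_eta, Fin.mk_one, PiLp.add_apply, PiLp.smul_apply, aux8pt_zero, aux8pt_one, smul_eq_mul]
      · field_simp; ring
      · field_simp; rw [h3]; ring

lemma aux8_mem_vert {a b c : ℝ} (hbc : b ≤ c) {z : EuclideanSpace ℝ (Fin 2)} :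
    z ∈ segment ℝ (aux8pt a b) (aux8pt a c) ↔ z 0 = a ∧ b ≤ z 1 ∧ z 1 ≤ c := by
  rw [segment_eq_image]
  constructor
  · rintro ⟨θ, ⟨h0, h1⟩, rfl⟩
    simp only [PiLp.add_apply, PiLp.smul_apply, aux8pt_zero, aux8pt_one, smul_eq_mul]
    refine ⟨by ring, by nlinarith, by nlinarith⟩
  · rintro ⟨h1, h2, h3⟩
    rcases eq_or_lt_of_le hbc with h | h
    · refine ⟨0, ⟨le_refl _, zero_le_one⟩, ?_⟩
      have hz : z 1 = b := le_antisymm (h ▸ h3) h2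
      ext i; fin_cases i <;>
        simp [PiLp.add_apply, PiLp.smul_apply, hz, h1]
    · have hcb : c - b ≠ 0 := sub_ne_zero.2 (ne_of_gt h)
      refine ⟨(z 1 - b)/(c - b), ⟨div_nonneg (by linarith) (by linarith),
        (div_le_one (by linarith)).2 (by linarith)⟩, ?_⟩
      ext i; fin_cases i <;>
        simp only [Fin.zero_eta, Fin.mk_one, PiLp.add_apply, PiLp.smul_apply, aux8pt_zero, aux8pt_one, smul_eq_mul]
      · field_simp; rw [h1]; ring
      · field_simp; ring

lemma aux8_half_le {a b : ℕ} (h : (a:ℝ) ≤ (b:ℝ) + 1/2) : a ≤ b := by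
  have h2 : (a:ℝ) < (b:ℝ) + 1 := by linarith
  have h3 : a < b + 1 := by exact_mod_cast h2
  omega

lemma aux8_no_half {a b : ℕ} (h : (a:ℝ) = (b:ℝ) + 1/2) : False := by
  have h2 : ((2*a : ℕ):ℝ) = ((2*b+1 : ℕ):ℝ) := by push_cast; linarith
  have h3 : 2*a = 2*b+1 := by exact_mod_cast h2
  omega

lemma aux8_fin_eq {n : ℕ} {a b : Fin n} (h : (a.val:ℝ) = (b.val:ℝ)) : a = b :=
  Fin.ext (by exact_mod_cast h)

lemma aux8_fin_lt {n : ℕ} (i : Fin n) : (i.val:ℝ) + 1 ≤ (n:ℝ) := by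
  exact_mod_cast Nat.succ_le_of_lt i.isLt

section NLemmas
variable {n : ℕ}

lemma aux8_uu (i i' : Fin n) :
    ((segment ℝ (aux8pt 0 i.val) (aux8pt n i.val)) ∩
     (segment ℝ (aux8pt 0 i'.val) (aux8pt n i'.val))).Nonempty ↔ i = i' := by
  constructor
  · rintro ⟨z, hz1, hz2⟩
    rw [aux8_mem_horiz (Nat.cast_nonneg n)] at hz1 hz2
    exact aux8_fin_eq (hz1.2.2.symm.trans hz2.2.2)
  · rintro rfl
    exact ⟨aux8pt 0 i.val, left_mem_segment _ _ _, left_mem_segment _ _ _⟩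

lemma aux8_uw (i j : Fin n) :
    ((segment ℝ (aux8pt 0 i.val) (aux8pt n i.val)) ∩
     (segment ℝ (aux8pt j.val (-1)) (aux8pt j.val ((n:ℝ)-1)))).Nonempty := by
  have hi := aux8_fin_lt i
  have hj := aux8_fin_lt j
  have h0i : (0:ℝ) ≤ (i.val:ℝ) := Nat.cast_nonneg _
  have h0j : (0:ℝ) ≤ (j.val:ℝ) := Nat.cast_nonneg _
  refine ⟨aux8pt j.val i.val, ?_, ?_⟩
  · rw [aux8_mem_horiz (Nat.cast_nonneg n)]
    refine ⟨?_, ?_, ?_⟩ <;> simp only [aux8pt_zero, aux8pt_one] <;> linarith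
  · rw [aux8_mem_vert (by linarith : (-1:ℝ) ≤ (n:ℝ)-1)]
    refine ⟨?_, ?_, ?_⟩ <;> simp only [aux8pt_zero, aux8pt_one] <;> linarith

lemma aux8_ux (i i' j' : Fin n) :
    ((segment ℝ (aux8pt 0 i.val) (aux8pt n i.val)) ∩
     (segment ℝ (aux8pt ((j'.val:ℝ)+1/2) ((i'.val:ℝ)-1/2)) (aux8pt ((j'.val:ℝ)+1/2) i'.val))).Nonempty
      ↔ i' = i := by
  constructor
  · rintro ⟨z, hz1, hz2⟩
    rw [aux8_mem_horiz (Nat.cast_nonneg n)] at hz1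
    rw [aux8_mem_vert (by linarith : ((i'.val:ℝ)-1/2) ≤ (i'.val:ℝ))] at hz2
    obtain ⟨-, -, hzy⟩ := hz1
    obtain ⟨-, ha, hb⟩ := hz2
    rw [hzy] at ha hb
    have h1 : i'.val ≤ i.val := aux8_half_le (by linarith)
    have h2 : i.val ≤ i'.val := Nat.cast_le.mp hb
    exact Fin.ext (le_antisymm h1 h2)
  · rintro rfl
    have hj := aux8_fin_lt j'
    have h0j : (0:ℝ) ≤ (j'.val:ℝ) := Nat.cast_nonneg _
    refine ⟨aux8pt ((j'.val:ℝ)+1/2) i'.val, ?_, ?_⟩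
    · rw [aux8_mem_horiz (Nat.cast_nonneg n)]
      refine ⟨?_, ?_, ?_⟩ <;> simp only [aux8pt_zero, aux8pt_one] <;> linarith
    · rw [aux8_mem_vert (by linarith : ((i'.val:ℝ)-1/2) ≤ (i'.val:ℝ))]
      refine ⟨rfl, ?_, ?_⟩ <;> simp only [aux8pt_one] <;> linarith

lemma aux8_uy (i i' j' : Fin n) :
    ¬ ((segment ℝ (aux8pt 0 i.val) (aux8pt n i.val)) ∩
     (segment ℝ (aux8pt (j'.val:ℝ) ((i'.val:ℝ)-1/2)) (aux8pt ((j'.val:ℝ)+1/2) ((i'.val:ℝ)-1/2)))).Nonempty := by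
  rintro ⟨z, hz1, hz2⟩
  rw [aux8_mem_horiz (Nat.cast_nonneg n)] at hz1
  rw [aux8_mem_horiz (by linarith : (j'.val:ℝ) ≤ (j'.val:ℝ)+1/2)] at hz2
  have h1 := hz1.2.2
  have h2 := hz2.2.2
  rw [h1] at h2
  exact aux8_no_half (a := i'.val) (b := i.val) (by linarith)

lemma aux8_ww (j j' : Fin n) :
    ((segment ℝ (aux8pt j.val (-1)) (aux8pt j.val ((n:ℝ)-1))) ∩
     (segment ℝ (aux8pt j'.val (-1)) (aux8pt j'.val ((n:ℝ)-1)))).Nonempty ↔ j = j' := by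
  have h0n : (0:ℝ) ≤ (n:ℝ) := Nat.cast_nonneg _
  have hn : (-1:ℝ) ≤ (n:ℝ)-1 := by linarith
  constructor
  · rintro ⟨z, hz1, hz2⟩
    rw [aux8_mem_vert hn] at hz1 hz2
    exact aux8_fin_eq (hz1.1.symm.trans hz2.1)
  · rintro rfl
    exact ⟨aux8pt j.val (-1), left_mem_segment _ _ _, left_mem_segment _ _ _⟩

lemma aux8_wx (j i' j' : Fin n) :
    ¬ ((segment ℝ (aux8pt j.val (-1)) (aux8pt j.val ((n:ℝ)-1))) ∩
     (segment ℝ (aux8pt ((j'.val:ℝ)+1/2) ((i'.val:ℝ)-1/2)) (aux8pt ((j'.val:ℝ)+1/2) i'.val))).Nonempty := by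
  rintro ⟨z, hz1, hz2⟩
  rw [aux8_mem_vert (by have h0n : (0:ℝ) ≤ (n:ℝ) := Nat.cast_nonneg _; linarith)] at hz1
  rw [aux8_mem_vert (by linarith : ((i'.val:ℝ)-1/2) ≤ (i'.val:ℝ))] at hz2
  have h1 := hz1.1
  have h2 := hz2.1
  rw [h1] at h2
  exact aux8_no_half (a := j.val) (b := j'.val) h2

lemma aux8_wy (j i' j' : Fin n) :
    ((segment ℝ (aux8pt j.val (-1)) (aux8pt j.val ((n:ℝ)-1))) ∩
     (segment ℝ (aux8pt (j'.val:ℝ) ((i'.val:ℝ)-1/2)) (aux8pt ((j'.val:ℝ)+1/2) ((i'.val:ℝ)-1/2)))).Nonempty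
      ↔ j' = j := by
  have h0n : (0:ℝ) ≤ (n:ℝ) := Nat.cast_nonneg _
  have hn : (-1:ℝ) ≤ (n:ℝ)-1 := by linarith
  constructor
  · rintro ⟨z, hz1, hz2⟩
    rw [aux8_mem_vert hn] at hz1
    rw [aux8_mem_horiz (by linarith : (j'.val:ℝ) ≤ (j'.val:ℝ)+1/2)] at hz2
    obtain ⟨hz0, -, -⟩ := hz1
    obtain ⟨ha, hb, -⟩ := hz2
    rw [hz0] at ha hb
    have h1 : j'.val ≤ j.val := by exact_mod_cast ha
    have h2 : j.val ≤ j'.val := aux8_half_le hb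
    exact Fin.ext (le_antisymm h1 h2)
  · rintro rfl
    have hi := aux8_fin_lt i'
    have h0i : (0:ℝ) ≤ (i'.val:ℝ) := Nat.cast_nonneg _
    refine ⟨aux8pt (j'.val:ℝ) ((i'.val:ℝ)-1/2), ?_, ?_⟩
    · rw [aux8_mem_vert hn]
      refine ⟨rfl, ?_, ?_⟩ <;> simp only [aux8pt_one] <;> linarith
    · rw [aux8_mem_horiz (by linarith : (j'.val:ℝ) ≤ (j'.val:ℝ)+1/2)]
      refine ⟨?_, ?_, rfl⟩ <;> simp only [aux8pt_zero] <;> linarith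

lemma aux8_xx (i j i' j' : Fin n) :
    ((segment ℝ (aux8pt ((j.val:ℝ)+1/2) ((i.val:ℝ)-1/2)) (aux8pt ((j.val:ℝ)+1/2) i.val)) ∩
     (segment ℝ (aux8pt ((j'.val:ℝ)+1/2) ((i'.val:ℝ)-1/2)) (aux8pt ((j'.val:ℝ)+1/2) i'.val))).Nonempty
      ↔ i = i' ∧ j = j' := by
  constructor
  · rintro ⟨z, hz1, hz2⟩
    rw [aux8_mem_vert (by linarith : ((i.val:ℝ)-1/2) ≤ (i.val:ℝ))] at hz1
    rw [aux8_mem_vert (by linarith : ((i'.val:ℝ)-1/2) ≤ (i'.val:ℝ))] at hz2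
    obtain ⟨h0, ha, hb⟩ := hz1
    obtain ⟨h0', ha', hb'⟩ := hz2
    have hj : j = j' := aux8_fin_eq (by rw [h0] at h0'; linarith)
    have h1 : i.val ≤ i'.val := aux8_half_le (by linarith)
    have h2 : i'.val ≤ i.val := aux8_half_le (by linarith)
    exact ⟨Fin.ext (le_antisymm h1 h2), hj⟩
  · rintro ⟨rfl, rfl⟩
    exact ⟨_, left_mem_segment _ _ _, left_mem_segment _ _ _⟩

lemma aux8_xy (i j i' j' : Fin n) :
    ((segment ℝ (aux8pt ((j.val:ℝ)+1/2) ((i.val:ℝ)-1/2)) (aux8pt ((j.val:ℝ)+1/2) i.val)) ∩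
     (segment ℝ (aux8pt (j'.val:ℝ) ((i'.val:ℝ)-1/2)) (aux8pt ((j'.val:ℝ)+1/2) ((i'.val:ℝ)-1/2)))).Nonempty
      ↔ i = i' ∧ j = j' := by
  constructor
  · rintro ⟨z, hz1, hz2⟩
    rw [aux8_mem_vert (by linarith : ((i.val:ℝ)-1/2) ≤ (i.val:ℝ))] at hz1
    rw [aux8_mem_horiz (by linarith : (j'.val:ℝ) ≤ (j'.val:ℝ)+1/2)] at hz2
    obtain ⟨h0, ha, hb⟩ := hz1
    obtain ⟨ha', hb', h1'⟩ := hz2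
    rw [h0] at ha' hb'
    rw [h1'] at ha hb
    have hj1 : j'.val ≤ j.val := aux8_half_le (by linarith)
    have hj2r : (j.val:ℝ) ≤ (j'.val:ℝ) := by linarith
    have hi1r : (i.val:ℝ) ≤ (i'.val:ℝ) := by linarith
    have hj2 : j.val ≤ j'.val := by exact_mod_cast hj2r
    have hi1 : i.val ≤ i'.val := by exact_mod_cast hi1r
    have hi2 : i'.val ≤ i.val := aux8_half_le (by linarith)
    exact ⟨Fin.ext (le_antisymm hi1 hi2), Fin.ext (le_antisymm hj2 hj1)⟩
  · rintro ⟨rfl, rfl⟩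
    refine ⟨aux8pt ((j.val:ℝ)+1/2) ((i.val:ℝ)-1/2), ?_, ?_⟩
    · rw [aux8_mem_vert (by linarith : ((i.val:ℝ)-1/2) ≤ (i.val:ℝ))]
      refine ⟨rfl, ?_, ?_⟩ <;> simp only [aux8pt_one] <;> linarith
    · rw [aux8_mem_horiz (by linarith : (j.val:ℝ) ≤ (j.val:ℝ)+1/2)]
      refine ⟨?_, ?_, rfl⟩ <;> simp only [aux8pt_zero] <;> linarith

lemma aux8_yy (i j i' j' : Fin n) :
    ((segment ℝ (aux8pt (j.val:ℝ) ((i.val:ℝ)-1/2)) (aux8pt ((j.val:ℝ)+1/2) ((i.val:ℝ)-1/2))) ∩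
     (segment ℝ (aux8pt (j'.val:ℝ) ((i'.val:ℝ)-1/2)) (aux8pt ((j'.val:ℝ)+1/2) ((i'.val:ℝ)-1/2)))).Nonempty
      ↔ i = i' ∧ j = j' := by
  constructor
  · rintro ⟨z, hz1, hz2⟩
    rw [aux8_mem_horiz (by linarith : (j.val:ℝ) ≤ (j.val:ℝ)+1/2)] at hz1
    rw [aux8_mem_horiz (by linarith : (j'.val:ℝ) ≤ (j'.val:ℝ)+1/2)] at hz2
    obtain ⟨ha, hb, h1⟩ := hz1
    obtain ⟨ha', hb', h1'⟩ := hz2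
    have hi : i = i' := aux8_fin_eq (by rw [h1] at h1'; linarith)
    have hj1 : j.val ≤ j'.val := aux8_half_le (by linarith)
    have hj2 : j'.val ≤ j.val := aux8_half_le (by linarith)
    exact ⟨hi, Fin.ext (le_antisymm hj1 hj2)⟩
  · rintro ⟨rfl, rfl⟩
    exact ⟨_, left_mem_segment _ _ _, left_mem_segment _ _ _⟩

end NLemmas

noncomputable def aux8P (n : ℕ) : BnV n → EuclideanSpace ℝ (Fin 2)
  | Sum.inl (Sum.inl i) => aux8pt 0 i.val
  | Sum.inl (Sum.inr j) => aux8pt j.val (-1)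
  | Sum.inr (Sum.inl (i, j)) => aux8pt ((j.val:ℝ)+1/2) ((i.val:ℝ)-1/2)
  | Sum.inr (Sum.inr (i, j)) => aux8pt (j.val:ℝ) ((i.val:ℝ)-1/2)

noncomputable def aux8Q (n : ℕ) : BnV n → EuclideanSpace ℝ (Fin 2)
  | Sum.inl (Sum.inl i) => aux8pt n i.val
  | Sum.inl (Sum.inr j) => aux8pt j.val ((n:ℝ)-1)
  | Sum.inr (Sum.inl (i, j)) => aux8pt ((j.val:ℝ)+1/2) (i.val:ℝ)
  | Sum.inr (Sum.inr (i, j)) => aux8pt ((j.val:ℝ)+1/2) ((i.val:ℝ)-1/2)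

lemma aux8_key (n : ℕ) (u v : BnV n) (huv : u ≠ v) :
    (BnGraph n).Adj u v ↔
      (segment ℝ (aux8P n u) (aux8Q n u) ∩ segment ℝ (aux8P n v) (aux8Q n v)).Nonempty := by
  obtain (i | j) | (⟨i, j⟩ | ⟨i, j⟩) := u <;> obtain (i' | j') | (⟨i', j'⟩ | ⟨i', j'⟩) := v <;>
    simp only [aux8P, aux8Q, BnGraph, SimpleGraph.fromRel_adj, BnRel, ne_eq]
  · -- u u
    rw [aux8_uu]
    constructor
    · rintro ⟨-, h | h⟩ <;> exact h.elim
    · intro h; exact (huv (by rw [h])).elim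
  · -- u w
    exact iff_of_true ⟨huv, Or.inl trivial⟩ (aux8_uw i j')
  · -- u x
    rw [aux8_ux]
    constructor
    · rintro ⟨-, h | h⟩; exacts [h, h.elim]
    · intro h; exact ⟨huv, Or.inl h⟩
  · -- u y
    apply iff_of_false
    · rintro ⟨-, h | h⟩ <;> exact h
    · exact aux8_uy i i' j'
  · -- w u
    exact iff_of_true ⟨huv, Or.inr trivial⟩ (by rw [Set.inter_comm]; exact aux8_uw i' j)
  · -- w w
    rw [aux8_ww]
    constructor
    · rintro ⟨-, h | h⟩ <;> exact h.elim
    · intro h; exact (huv (by rw [h])).elim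
  · -- w x
    apply iff_of_false
    · rintro ⟨-, h | h⟩ <;> exact h
    · exact aux8_wx j i' j'
  · -- w y
    rw [aux8_wy]
    constructor
    · rintro ⟨-, h | h⟩; exacts [h.elim, h]
    · intro h; exact ⟨huv, Or.inr h⟩
  · -- x u
    rw [Set.inter_comm, aux8_ux i' i j]
    constructor
    · rintro ⟨-, h | h⟩; exacts [h.elim, h]
    · intro h; exact ⟨huv, Or.inr h⟩
  · -- x w
    apply iff_of_false
    · rintro ⟨-, h | h⟩ <;> exact h
    · intro h; exact aux8_wx j' i j (by rwa [Set.inter_comm] at h)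
  · -- x x
    apply iff_of_false
    · rintro ⟨-, h | h⟩ <;> exact h
    · rw [aux8_xx]; rintro ⟨rfl, rfl⟩; exact huv rfl
  · -- x y
    rw [aux8_xy]
    constructor
    · rintro ⟨-, h | h⟩
      · obtain ⟨rfl, rfl⟩ := Prod.mk.inj h; exact ⟨rfl, rfl⟩
      · exact h.elim
    · rintro ⟨rfl, rfl⟩; exact ⟨huv, Or.inl rfl⟩
  · -- y u
    apply iff_of_false
    · rintro ⟨-, h | h⟩ <;> exact h
    · intro h; exact aux8_uy i' i j (by rwa [Set.inter_comm] at h)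
  · -- y w
    rw [Set.inter_comm, aux8_wy j' i j]
    constructor
    · rintro ⟨-, h | h⟩; exacts [h, h.elim]
    · intro h; exact ⟨huv, Or.inl h⟩
  · -- y x
    rw [Set.inter_comm, aux8_xy i' j' i j]
    constructor
    · rintro ⟨-, h | h⟩
      · exact h.elim
      · obtain ⟨rfl, rfl⟩ := Prod.mk.inj h; exact ⟨rfl, rfl⟩
    · rintro ⟨rfl, rfl⟩; exact ⟨huv, Or.inr rfl⟩
  · -- y y
    apply iff_of_false
    · rintro ⟨-, h | h⟩ <;> exact h
    · rw [aux8_yy]; rintro ⟨rfl, rfl⟩; exact huv rfl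

/-- for every `n ≥ 1`, `B_n` is isomorphic to the intersection graph of a
finite family of axis-parallel closed segments in the plane among which at most two
distinct Euclidean lengths occur. -/
theorem stmt8 (n : ℕ) (hn : 1 ≤ n) :
    ∃ p q : BnV n → EuclideanSpace ℝ (Fin 2),
      (∀ v : BnV n, p v 0 = q v 0 ∨ p v 1 = q v 1) ∧
      (∃ l₁ l₂ : ℝ, ∀ v : BnV n, dist (p v) (q v) = l₁ ∨ dist (p v) (q v) = l₂) ∧
      Function.Injective (fun v : BnV n => segment ℝ (p v) (q v)) ∧
      (∀ u v : BnV n, u ≠ v →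
        ((BnGraph n).Adj u v ↔
          (segment ℝ (p u) (q u) ∩ segment ℝ (p v) (q v)).Nonempty)) := by
  classical
  refine ⟨aux8P n, aux8Q n, ?_, ⟨(n:ℝ), 1/2, ?_⟩, ?_, fun u v huv => aux8_key n u v huv⟩
  · -- axis-parallel
    rintro ((i | j) | (⟨i, j⟩ | ⟨i, j⟩))
    · exact Or.inr rfl
    · exact Or.inl rfl
    · exact Or.inl rfl
    · exact Or.inr rfl
  · -- lengths
    rintro ((i | j) | (⟨i, j⟩ | ⟨i, j⟩))
    · left
      show dist (aux8pt 0 (i.val:ℝ)) (aux8pt n (i.val:ℝ)) = (n:ℝ)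
      rw [aux8_dist, show ((0:ℝ)-(n:ℝ))^2 + ((i.val:ℝ)-(i.val:ℝ))^2 = (n:ℝ)^2 from by ring]
      exact Real.sqrt_sq (Nat.cast_nonneg n)
    · left
      show dist (aux8pt (j.val:ℝ) (-1)) (aux8pt (j.val:ℝ) ((n:ℝ)-1)) = (n:ℝ)
      rw [aux8_dist, show ((j.val:ℝ)-(j.val:ℝ))^2 + ((-1:ℝ)-((n:ℝ)-1))^2 = (n:ℝ)^2 from by ring]
      exact Real.sqrt_sq (Nat.cast_nonneg n)
    · right
      show dist (aux8pt ((j.val:ℝ)+1/2) ((i.val:ℝ)-1/2)) (aux8pt ((j.val:ℝ)+1/2) (i.val:ℝ)) = 1/2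
      rw [aux8_dist, show (((j.val:ℝ)+1/2)-((j.val:ℝ)+1/2))^2 + (((i.val:ℝ)-1/2)-(i.val:ℝ))^2
        = ((1:ℝ)/2)^2 from by ring]
      exact Real.sqrt_sq (by norm_num)
    · right
      show dist (aux8pt (j.val:ℝ) ((i.val:ℝ)-1/2)) (aux8pt ((j.val:ℝ)+1/2) ((i.val:ℝ)-1/2)) = 1/2
      rw [aux8_dist, show ((j.val:ℝ)-((j.val:ℝ)+1/2))^2 + (((i.val:ℝ)-1/2)-((i.val:ℝ)-1/2))^2
        = ((1:ℝ)/2)^2 from by ring]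
      exact Real.sqrt_sq (by norm_num)
  · -- injectivity
    intro a b hab
    simp only at hab
    by_contra hne
    have hNon : (segment ℝ (aux8P n a) (aux8Q n a) ∩ segment ℝ (aux8P n b) (aux8Q n b)).Nonempty :=
      ⟨aux8P n a, left_mem_segment _ _ _, hab ▸ left_mem_segment ℝ (aux8P n a) (aux8Q n a)⟩
    have hadj := (aux8_key n a b hne).mpr hNon
    clear hNon
    obtain (i | j) | (⟨i, j⟩ | ⟨i, j⟩) := a <;> obtain (i' | j') | (⟨i', j'⟩ | ⟨i', j'⟩) := b <;>
      simp only [aux8P, aux8Q, BnGraph, SimpleGraph.fromRel_adj, BnRel, ne_eq] at hadj hab <;>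
      [skip; skip; skip; (exact hadj.2.elim (fun h => h) fun h => h);
       skip; skip; (exact hadj.2.elim (fun h => h) fun h => h); skip;
       skip; (exact hadj.2.elim (fun h => h) fun h => h); skip; skip;
       (exact hadj.2.elim (fun h => h) fun h => h); skip; skip; skip]
    · -- u u : adjacency impossible
      exact hadj.2.elim (fun h => h.elim) fun h => h.elim
    · -- u w : segments cannot be equal
      have h1 := hab ▸ left_mem_segment ℝ (aux8pt 0 (i.val:ℝ)) (aux8pt n (i.val:ℝ))
      have h2 := hab ▸ right_mem_segment ℝ (aux8pt 0 (i.val:ℝ)) (aux8pt n (i.val:ℝ))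
      rw [aux8_mem_vert (by have h0n : (0:ℝ) ≤ (n:ℝ) := Nat.cast_nonneg _; linarith)] at h1 h2
      have e1 : (0:ℝ) = (j'.val:ℝ) := h1.1
      have e2 : (n:ℝ) = (j'.val:ℝ) := h2.1
      have := aux8_fin_lt i
      have h0i : (0:ℝ) ≤ (i.val:ℝ) := Nat.cast_nonneg _
      linarith
    · -- u x
      have h1 := hab ▸ left_mem_segment ℝ (aux8pt 0 (i.val:ℝ)) (aux8pt n (i.val:ℝ))
      rw [aux8_mem_vert (by linarith : ((i'.val:ℝ)-1/2) ≤ (i'.val:ℝ))] at h1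
      have e1 : (0:ℝ) = (j'.val:ℝ)+1/2 := h1.1
      have h0j : (0:ℝ) ≤ (j'.val:ℝ) := Nat.cast_nonneg _
      linarith
    · -- w u
      have h1 := hab ▸ left_mem_segment ℝ (aux8pt (j.val:ℝ) (-1)) (aux8pt (j.val:ℝ) ((n:ℝ)-1))
      rw [aux8_mem_horiz (Nat.cast_nonneg n)] at h1
      have e1 : (-1:ℝ) = (i'.val:ℝ) := h1.2.2
      have h0i : (0:ℝ) ≤ (i'.val:ℝ) := Nat.cast_nonneg _
      linarith
    · -- w w
      exact hadj.2.elim (fun h => h.elim) fun h => h.elim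
    · -- w y
      have h1 := hab ▸ left_mem_segment ℝ (aux8pt (j.val:ℝ) (-1)) (aux8pt (j.val:ℝ) ((n:ℝ)-1))
      rw [aux8_mem_horiz (by linarith : (j'.val:ℝ) ≤ (j'.val:ℝ)+1/2)] at h1
      have e1 : (-1:ℝ) = (i'.val:ℝ)-1/2 := h1.2.2
      have h0i : (0:ℝ) ≤ (i'.val:ℝ) := Nat.cast_nonneg _
      linarith
    · -- x u
      have h1 := hab ▸ left_mem_segment ℝ (aux8pt ((j.val:ℝ)+1/2) ((i.val:ℝ)-1/2))
        (aux8pt ((j.val:ℝ)+1/2) (i.val:ℝ))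
      rw [aux8_mem_horiz (Nat.cast_nonneg n)] at h1
      have h2 := hab ▸ right_mem_segment ℝ (aux8pt ((j.val:ℝ)+1/2) ((i.val:ℝ)-1/2))
        (aux8pt ((j.val:ℝ)+1/2) (i.val:ℝ))
      rw [aux8_mem_horiz (Nat.cast_nonneg n)] at h2
      have e1 : (i.val:ℝ)-1/2 = (i'.val:ℝ) := h1.2.2
      have e2 : (i.val:ℝ) = (i'.val:ℝ) := h2.2.2
      linarith
    · -- x x
      exact hadj.2.elim (fun h => h.elim) fun h => h.elim
    · -- x y
      have h1 := hab ▸ left_mem_segment ℝ (aux8pt ((j.val:ℝ)+1/2) ((i.val:ℝ)-1/2))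
        (aux8pt ((j.val:ℝ)+1/2) (i.val:ℝ))
      rw [aux8_mem_horiz (by linarith : (j'.val:ℝ) ≤ (j'.val:ℝ)+1/2)] at h1
      have h2 := hab ▸ right_mem_segment ℝ (aux8pt ((j.val:ℝ)+1/2) ((i.val:ℝ)-1/2))
        (aux8pt ((j.val:ℝ)+1/2) (i.val:ℝ))
      rw [aux8_mem_horiz (by linarith : (j'.val:ℝ) ≤ (j'.val:ℝ)+1/2)] at h2
      have e1 : (i.val:ℝ)-1/2 = (i'.val:ℝ)-1/2 := h1.2.2
      have e2 : (i.val:ℝ) = (i'.val:ℝ)-1/2 := h2.2.2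
      linarith
    · -- y w
      have h1 := hab ▸ left_mem_segment ℝ (aux8pt (j.val:ℝ) ((i.val:ℝ)-1/2))
        (aux8pt ((j.val:ℝ)+1/2) ((i.val:ℝ)-1/2))
      have h2 := hab ▸ right_mem_segment ℝ (aux8pt (j.val:ℝ) ((i.val:ℝ)-1/2))
        (aux8pt ((j.val:ℝ)+1/2) ((i.val:ℝ)-1/2))
      rw [aux8_mem_vert (by have h0n : (0:ℝ) ≤ (n:ℝ) := Nat.cast_nonneg _; linarith)] at h1 h2
      have e1 : (j.val:ℝ) = (j'.val:ℝ) := h1.1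
      have e2 : (j.val:ℝ)+1/2 = (j'.val:ℝ) := h2.1
      linarith
    · -- y x
      have h1 := hab ▸ left_mem_segment ℝ (aux8pt (j.val:ℝ) ((i.val:ℝ)-1/2))
        (aux8pt ((j.val:ℝ)+1/2) ((i.val:ℝ)-1/2))
      have h2 := hab ▸ right_mem_segment ℝ (aux8pt (j.val:ℝ) ((i.val:ℝ)-1/2))
        (aux8pt ((j.val:ℝ)+1/2) ((i.val:ℝ)-1/2))
      rw [aux8_mem_vert (by linarith : ((i'.val:ℝ)-1/2) ≤ (i'.val:ℝ))] at h1 h2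
      have e1 : (j.val:ℝ) = (j'.val:ℝ)+1/2 := h1.1
      have e2 : (j.val:ℝ)+1/2 = (j'.val:ℝ)+1/2 := h2.1
      linarith
    · -- y y
      exact hadj.2.elim (fun h => h.elim) fun h => h.elim
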